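/- arXiv:2005.01894 — 4 statements merged into one kernel-verified Lean document; each statement's English description precedes it below -/
import Mathlib

section
/- For polynomial functors p and q, the type of natural transformations from the associated functor of p to the associated functor of q is in bijection with Π (i : p.A), Σ (j : q.A), (q.B j → p.B i); that is, a morphism of polynomials is given by an on-positions function f : p.A → q.A together with, for each i : p.A, an on-directions function f♯_i : q.B (f i) → p.B i. -/
open CategoryTheory

universe u

/-- The associated functor `Type u ⥤ Type u` of a polynomial functor. -/
def PFunctor.toFunctor (P : PFunctor.{u, u}) : Type u ⥤ Type u where
  obj X := P.Obj X
  map f := TypeCat.ofHom (fun x => P.map f x)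
  map_id := by intro X; ext x; exact P.id_map x
  map_comp := by intro X Y Z f g; ext x; exact (P.map_map f g x).symm

/-- morphisms of polynomial functors are given by an on-positions function
together with on-directions functions. -/
theorem stmt_1 (p q : PFunctor.{u, u}) :
    Nonempty ((p.toFunctor ⟶ q.toFunctor) ≃ (∀ i : p.A, Σ j : q.A, (q.B j → p.B i))) := by
  refine ⟨{
    toFun := fun α i => α.app (p.B i) (⟨i, id⟩ : p.Obj (p.B i))
    invFun := fun f => {
      app := fun X => TypeCat.ofHom (fun (x : p.Obj X) => (⟨(f x.1).1, fun d => x.2 ((f x.1).2 d)⟩ : q.Obj X))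
      naturality := by intro X Y g; rfl }
    left_inv := ?_
    right_inv := ?_ }⟩
  · intro α
    ext X x
    change p.Obj X at x
    obtain ⟨a, v⟩ := x
    have h := ConcreteCategory.congr_hom (α.naturality (X := p.B a) (Y := X) (TypeCat.ofHom v)) (⟨a, id⟩ : p.Obj (p.B a))
    exact h.symm
  · intro f
    funext i
    rfl
end

section
/- The category of polynomial functors is cartesian closed: for polynomial functors p, q, r there is a bijection, natural in r, between natural transformations from the pointwise product of (the associated functors of) r and p to (the associated functor of) q, and natural transformations from r to the functor q^p defined by q^p(X) = Π (i : p.A), Σ (j : q.A), (q.B j → (p.B i ⊕ X)) (i.e. q^p is the product over i : p.A of the composites q ∘ (p.B i + y), which is again a polynomial functor). -/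
open CategoryTheory

universe u

/-- The pointwise product of two functors `Type u ⥤ Type u`. -/
def prodFun (F G : Type u ⥤ Type u) : Type u ⥤ Type u where
  obj X := F.obj X × G.obj X
  map f := TypeCat.ofHom (fun x => (F.map f x.1, G.map f x.2))
  map_id := by intro X; ext x <;> simp
  map_comp := by intro X Y Z f g; ext x <;> simp

/-- The internal hom for the cartesian closed structure:
`q^p (X) = Π (i : p.A), Σ (j : q.A), (q.B j → (p.B i ⊕ X))`. -/
def expFun (p q : PFunctor.{u, u}) : Type u ⥤ Type u where
  obj X := ∀ i : p.A, Σ j : q.A, (q.B j → (p.B i ⊕ X))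
  map f := TypeCat.ofHom (fun g i => ⟨(g i).1, fun d => Sum.map id f ((g i).2 d)⟩)
  map_id := by
    intro X; ext g : 2; funext g; funext i
    show (⟨(g i).1, fun d => Sum.map id id ((g i).2 d)⟩ : Σ j : q.A, (q.B j → p.B i ⊕ X)) = g i
    simp [Sum.map_id_id]
  map_comp := by
    intro X Y Z f h; ext g : 2; funext g; funext i
    show (⟨(g i).1, fun d => Sum.map id (f ≫ h) ((g i).2 d)⟩ : Σ j : q.A, (q.B j → p.B i ⊕ Z))
      = ⟨(g i).1, fun d => Sum.map id h (Sum.map id f ((g i).2 d))⟩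
    congr 1
    funext d
    cases (g i).2 d <;> rfl

/-- The natural transformation of associated functors induced by a morphism of polynomials
given by on-positions and on-directions data. -/
def lensNat {p q : PFunctor.{u, u}} (f : ∀ i : p.A, Σ j : q.A, (q.B j → p.B i)) :
    p.toFunctor ⟶ q.toFunctor where
  app X := TypeCat.ofHom (fun x => ⟨(f x.1).1, fun d => x.2 ((f x.1).2 d)⟩)
  naturality := by intros; rfl

/-- The induced morphism `r' × p ⟶ r × p` on pointwise products of associated functors. -/
def lensProdWhisker (p : PFunctor.{u, u}) {r r' : PFunctor.{u, u}}
    (f : ∀ i : r'.A, Σ j : r.A, (r.B j → r'.B i)) :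
    prodFun r'.toFunctor p.toFunctor ⟶ prodFun r.toFunctor p.toFunctor where
  app X := TypeCat.ofHom (fun x => (⟨(f x.1.1).1, fun d => x.1.2 ((f x.1.1).2 d)⟩, x.2))
  naturality := by intros; rfl

def curryFwd (p q r : PFunctor.{u, u}) (α : prodFun r.toFunctor p.toFunctor ⟶ q.toFunctor) :
    r.toFunctor ⟶ expFun p q where
  app X := TypeCat.ofHom (fun x i =>
    ⟨(α.app (Sum (r.B x.1) (p.B i)) (⟨x.1, Sum.inl⟩, ⟨i, Sum.inr⟩)).1,
     fun d => Sum.map id x.2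
       (Sum.swap ((α.app (Sum (r.B x.1) (p.B i)) (⟨x.1, Sum.inl⟩, ⟨i, Sum.inr⟩)).2 d))⟩)
  naturality := by
    intro X Y f
    ext : 2
    funext x
    obtain ⟨a, g⟩ := x
    funext i
    show (⟨(α.app (Sum (r.B a) (p.B i)) (⟨a, Sum.inl⟩, ⟨i, Sum.inr⟩)).1,
        fun d => Sum.map id (fun b => f (g b))
          (Sum.swap ((α.app (Sum (r.B a) (p.B i)) (⟨a, Sum.inl⟩, ⟨i, Sum.inr⟩)).2 d))⟩ :
        Σ j : q.A, (q.B j → p.B i ⊕ Y)) =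
      ⟨(α.app (Sum (r.B a) (p.B i)) (⟨a, Sum.inl⟩, ⟨i, Sum.inr⟩)).1,
        fun d => Sum.map id f (Sum.map id g
          (Sum.swap ((α.app (Sum (r.B a) (p.B i)) (⟨a, Sum.inl⟩, ⟨i, Sum.inr⟩)).2 d)))⟩
    congr 1
    funext d
    cases (α.app (Sum (r.B a) (p.B i)) (⟨a, Sum.inl⟩, ⟨i, Sum.inr⟩)).2 d with
    | inl b => rfl
    | inr c => rfl

def curryBwd (p q r : PFunctor.{u, u}) (β : r.toFunctor ⟶ expFun p q) :
    prodFun r.toFunctor p.toFunctor ⟶ q.toFunctor where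
  app X := TypeCat.ofHom (fun x =>
    ⟨(β.app X x.1 x.2.1).1, fun d => Sum.elim x.2.2 id ((β.app X x.1 x.2.1).2 d)⟩)
  naturality := by
    intro X Y f
    ext : 2
    funext x
    obtain ⟨⟨a, g⟩, ⟨i, y⟩⟩ := x
    have h : β.app Y ⟨a, fun b => f (g b)⟩ i
        = ⟨(β.app X ⟨a, g⟩ i).1, fun d => Sum.map id f ((β.app X ⟨a, g⟩ i).2 d)⟩ :=
      congrFun (FunctorToTypes.naturality (φ := β) f ⟨a, g⟩) i
    show (⟨(β.app Y ⟨a, fun b => f (g b)⟩ i).1,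
        fun d => Sum.elim (fun c => f (y c)) id ((β.app Y ⟨a, fun b => f (g b)⟩ i).2 d)⟩ :
        q.Obj Y) =
      ⟨(β.app X ⟨a, g⟩ i).1, fun d => f (Sum.elim y id ((β.app X ⟨a, g⟩ i).2 d))⟩
    rw [h]
    show (⟨(β.app X ⟨a, g⟩ i).1,
        fun d => Sum.elim (fun c => f (y c)) id (Sum.map id f ((β.app X ⟨a, g⟩ i).2 d))⟩ :
        q.Obj Y) = _
    congr 1
    funext d
    cases (β.app X ⟨a, g⟩ i).2 d with
    | inl b => rfl
    | inr c => rfl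

theorem curry_left_inv (p q r : PFunctor.{u, u})
    (α : prodFun r.toFunctor p.toFunctor ⟶ q.toFunctor) :
    curryBwd p q r (curryFwd p q r α) = α := by
  apply NatTrans.ext
  funext X
  ext : 2
  funext x
  obtain ⟨⟨a, g⟩, ⟨i, y⟩⟩ := x
  have h : α.app X (⟨a, g⟩, ⟨i, y⟩)
      = ⟨(α.app (Sum (r.B a) (p.B i)) (⟨a, Sum.inl⟩, ⟨i, Sum.inr⟩)).1,
         fun d => Sum.elim g y
           ((α.app (Sum (r.B a) (p.B i)) (⟨a, Sum.inl⟩, ⟨i, Sum.inr⟩)).2 d)⟩ :=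
    FunctorToTypes.naturality (φ := α) (TypeCat.ofHom (Sum.elim g y))
      ((⟨a, Sum.inl⟩, ⟨i, Sum.inr⟩) : (prodFun r.toFunctor p.toFunctor).obj (Sum (r.B a) (p.B i)))
  show (⟨(α.app (Sum (r.B a) (p.B i)) (⟨a, Sum.inl⟩, ⟨i, Sum.inr⟩)).1,
      fun d => Sum.elim y id (Sum.map id g
        (Sum.swap ((α.app (Sum (r.B a) (p.B i)) (⟨a, Sum.inl⟩, ⟨i, Sum.inr⟩)).2 d)))⟩ :
      q.Obj X) = α.app X (⟨a, g⟩, ⟨i, y⟩)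
  rw [h]
  congr 1
  funext d
  cases (α.app (Sum (r.B a) (p.B i)) (⟨a, Sum.inl⟩, ⟨i, Sum.inr⟩)).2 d with
  | inl b => rfl
  | inr c => rfl

theorem curry_right_inv (p q r : PFunctor.{u, u}) (β : r.toFunctor ⟶ expFun p q) :
    curryFwd p q r (curryBwd p q r β) = β := by
  apply NatTrans.ext
  funext X
  ext : 2
  funext x
  obtain ⟨a, g⟩ := x
  funext i
  have hv : β.app (Sum (r.B a) (p.B i)) ⟨a, Sum.inl⟩ i
      = ⟨(β.app (r.B a) ⟨a, id⟩ i).1,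
         fun d => Sum.map id Sum.inl ((β.app (r.B a) ⟨a, id⟩ i).2 d)⟩ :=
    congrFun (FunctorToTypes.naturality (φ := β) (TypeCat.ofHom (Sum.inl : r.B a → Sum (r.B a) (p.B i))) ⟨a, id⟩) i
  have hx : β.app X ⟨a, g⟩ i
      = ⟨(β.app (r.B a) ⟨a, id⟩ i).1,
         fun d => Sum.map id g ((β.app (r.B a) ⟨a, id⟩ i).2 d)⟩ :=
    congrFun (FunctorToTypes.naturality (φ := β) (TypeCat.ofHom g) ⟨a, id⟩) i
  show (⟨(β.app (Sum (r.B a) (p.B i)) ⟨a, Sum.inl⟩ i).1,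
      fun d => Sum.map id g (Sum.swap (Sum.elim Sum.inr id
        ((β.app (Sum (r.B a) (p.B i)) ⟨a, Sum.inl⟩ i).2 d)))⟩ :
      Σ j : q.A, (q.B j → p.B i ⊕ X)) = β.app X ⟨a, g⟩ i
  rw [hv, hx]
  show (⟨(β.app (r.B a) ⟨a, id⟩ i).1,
      fun d => Sum.map id g (Sum.swap (Sum.elim Sum.inr id
        (Sum.map id Sum.inl ((β.app (r.B a) ⟨a, id⟩ i).2 d))))⟩ :
      Σ j : q.A, (q.B j → p.B i ⊕ X)) = _
  congr 1
  funext d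
  cases (β.app (r.B a) ⟨a, id⟩ i).2 d with
  | inl c => rfl
  | inr b => rfl

theorem curry_natural (p q : PFunctor.{u, u}) (r r' : PFunctor.{u, u})
    (f : ∀ i : r'.A, Σ j : r.A, (r.B j → r'.B i))
    (α : prodFun r.toFunctor p.toFunctor ⟶ q.toFunctor) :
    curryFwd p q r' (lensProdWhisker p f ≫ α) = lensNat f ≫ curryFwd p q r α := by
  apply NatTrans.ext
  funext X
  ext : 2
  funext x
  obtain ⟨a', g⟩ := x
  funext i
  have h : α.app (Sum (r'.B a') (p.B i))
        (⟨(f a').1, fun b => Sum.inl ((f a').2 b)⟩, ⟨i, Sum.inr⟩)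
      = ⟨(α.app (Sum (r.B (f a').1) (p.B i)) (⟨(f a').1, Sum.inl⟩, ⟨i, Sum.inr⟩)).1,
         fun d => Sum.map (f a').2 id
           ((α.app (Sum (r.B (f a').1) (p.B i)) (⟨(f a').1, Sum.inl⟩, ⟨i, Sum.inr⟩)).2 d)⟩ :=
    FunctorToTypes.naturality (φ := α) (TypeCat.ofHom (Sum.map (f a').2 id))
      ((⟨(f a').1, Sum.inl⟩, ⟨i, Sum.inr⟩) :
        (prodFun r.toFunctor p.toFunctor).obj (Sum (r.B (f a').1) (p.B i)))
  show (⟨(α.app (Sum (r'.B a') (p.B i))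
        (⟨(f a').1, fun b => Sum.inl ((f a').2 b)⟩, ⟨i, Sum.inr⟩)).1,
      fun d => Sum.map id g (Sum.swap ((α.app (Sum (r'.B a') (p.B i))
        (⟨(f a').1, fun b => Sum.inl ((f a').2 b)⟩, ⟨i, Sum.inr⟩)).2 d))⟩ :
      Σ j : q.A, (q.B j → p.B i ⊕ X))
    = ⟨(α.app (Sum (r.B (f a').1) (p.B i)) (⟨(f a').1, Sum.inl⟩, ⟨i, Sum.inr⟩)).1,
      fun d => Sum.map id (fun b => g ((f a').2 b)) (Sum.swap
        ((α.app (Sum (r.B (f a').1) (p.B i)) (⟨(f a').1, Sum.inl⟩, ⟨i, Sum.inr⟩)).2 d))⟩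
  rw [h]
  show (⟨(α.app (Sum (r.B (f a').1) (p.B i)) (⟨(f a').1, Sum.inl⟩, ⟨i, Sum.inr⟩)).1,
      fun d => Sum.map id g (Sum.swap (Sum.map (f a').2 id
        ((α.app (Sum (r.B (f a').1) (p.B i)) (⟨(f a').1, Sum.inl⟩, ⟨i, Sum.inr⟩)).2 d)))⟩ :
      Σ j : q.A, (q.B j → p.B i ⊕ X)) = _
  congr 1
  funext d
  cases (α.app (Sum (r.B (f a').1) (p.B i)) (⟨(f a').1, Sum.inl⟩, ⟨i, Sum.inr⟩)).2 d with
  | inl b => rfl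
  | inr c => rfl

/-- `Poly` is cartesian closed: `Nat(r × p, q) ≅ Nat(r, q^p)`, naturally in `r`. -/
theorem stmt_4 (p q : PFunctor.{u, u}) :
    ∃ e : ∀ r : PFunctor.{u, u},
        (prodFun r.toFunctor p.toFunctor ⟶ q.toFunctor) ≃ (r.toFunctor ⟶ expFun p q),
      ∀ (r r' : PFunctor.{u, u}) (f : ∀ i : r'.A, Σ j : r.A, (r.B j → r'.B i))
        (α : prodFun r.toFunctor p.toFunctor ⟶ q.toFunctor),
        e r' (lensProdWhisker p f ≫ α) = lensNat f ≫ e r α := by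
  exact ⟨fun r => ⟨curryFwd p q r, curryBwd p q r, curry_left_inv p q r, curry_right_inv p q r⟩,
    curry_natural p q⟩
end

section
/- The Dirichlet monoidal structure on polynomial functors is closed: for polynomial functors p, q, r there is a bijection, natural in r, between natural transformations from the associated functor of r ⊗ p to the associated functor of q, and natural transformations from the associated functor of r to the functor [p,q] defined by [p,q](X) = Π (i : p.A), Σ (j : q.A), (q.B j → (p.B i × X)) (i.e. [p,q] is the product over i : p.A of the composites q ∘ (p.B i · y), which is again a polynomial functor). -/
open CategoryTheory

universe u

/-- The Dirichlet product of polynomial functors: positions multiply, directions multiply. -/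
def tensorPoly (p q : PFunctor.{u, u}) : PFunctor.{u, u} :=
  ⟨p.A × q.A, fun ij => p.B ij.1 × q.B ij.2⟩

/-- The internal hom for the Dirichlet monoidal structure:
`[p,q] (X) = Π (i : p.A), Σ (j : q.A), (q.B j → (p.B i × X))`. -/
def dirHomFun (p q : PFunctor.{u, u}) : Type u ⥤ Type u where
  obj X := ∀ i : p.A, Σ j : q.A, (q.B j → (p.B i × X))
  map f := TypeCat.ofHom (fun g i => ⟨(g i).1, fun d => Prod.map id f ((g i).2 d)⟩)
  map_id := by intro X; rfl
  map_comp := by intro X Y Z f h; rfl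

/-- The induced morphism `r' ⊗ p ⟶ r ⊗ p` on associated functors of Dirichlet products. -/
def lensTensorWhisker (p : PFunctor.{u, u}) {r r' : PFunctor.{u, u}}
    (f : ∀ i : r'.A, Σ j : r.A, (r.B j → r'.B i)) :
    (tensorPoly r' p).toFunctor ⟶ (tensorPoly r p).toFunctor where
  app X := TypeCat.ofHom (fun x => ⟨((f x.1.1).1, x.1.2), fun d => x.2 ((f x.1.1).2 d.1, d.2)⟩)
  naturality := by intros; rfl

def dirFwd (p q r : PFunctor.{u, u}) (α : (tensorPoly r p).toFunctor ⟶ q.toFunctor) :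
    r.toFunctor ⟶ dirHomFun p q where
  app X := TypeCat.ofHom (fun (x : r.Obj X) i =>
    ⟨(α.app (r.B x.1 × p.B i) ⟨(x.1, i), id⟩).1,
     fun d => (((α.app (r.B x.1 × p.B i) ⟨(x.1, i), id⟩).2 d).2,
               x.2 (((α.app (r.B x.1 × p.B i) ⟨(x.1, i), id⟩).2 d).1))⟩)
  naturality := by intros; rfl

def dirBwd (p q r : PFunctor.{u, u}) (β : r.toFunctor ⟶ dirHomFun p q) :
    (tensorPoly r p).toFunctor ⟶ q.toFunctor where
  app X := TypeCat.ofHom (fun (x : (tensorPoly r p).Obj X) =>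
    (⟨(β.app (r.B x.1.1) ⟨x.1.1, id⟩ x.1.2).1,
     fun d => x.2 (((β.app (r.B x.1.1) ⟨x.1.1, id⟩ x.1.2).2 d).2,
                   ((β.app (r.B x.1.1) ⟨x.1.1, id⟩ x.1.2).2 d).1)⟩ : q.Obj X))
  naturality := by intros; rfl

/-- the Dirichlet monoidal structure is closed:
`Nat(r ⊗ p, q) ≅ Nat(r, [p,q])`, naturally in `r`. -/
theorem stmt_5 (p q : PFunctor.{u, u}) :
    ∃ e : ∀ r : PFunctor.{u, u},
        ((tensorPoly r p).toFunctor ⟶ q.toFunctor) ≃ (r.toFunctor ⟶ dirHomFun p q),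
      ∀ (r r' : PFunctor.{u, u}) (f : ∀ i : r'.A, Σ j : r.A, (r.B j → r'.B i))
        (α : (tensorPoly r p).toFunctor ⟶ q.toFunctor),
        e r' (lensTensorWhisker p f ≫ α) = lensNat f ≫ e r α := by
  refine ⟨fun r => ⟨dirFwd p q r, dirBwd p q r, ?_, ?_⟩, ?_⟩
  · intro α
    ext X x
    obtain ⟨⟨a, i⟩, g⟩ : (tensorPoly r p).Obj X := x
    have h := ConcreteCategory.congr_hom (α.naturality (X := r.B a × p.B i) (Y := X) (TypeCat.ofHom g))
      ⟨(a, i), id⟩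
    dsimp [dirBwd, dirFwd, PFunctor.toFunctor, tensorPoly, PFunctor.map] at h ⊢
    exact h.symm
  · intro β
    ext X x
    obtain ⟨a, g⟩ : r.Obj X := x
    funext i
    have h := ConcreteCategory.congr_hom (β.naturality (X := r.B a) (Y := X) (TypeCat.ofHom g)) ⟨a, id⟩
    have h' := congrFun h i
    dsimp [dirBwd, dirFwd, dirHomFun, PFunctor.toFunctor, PFunctor.map] at h' ⊢
    exact h'.symm
  · intro r r' f α
    ext X x
    obtain ⟨a, g⟩ : r'.Obj X := x
    funext i
    dsimp [dirFwd, lensNat, lensTensorWhisker, PFunctor.toFunctor, tensorPoly]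
    have h := ConcreteCategory.congr_hom (α.naturality
      (X := r.B (f a).1 × p.B i) (Y := r'.B a × p.B i)
      (TypeCat.ofHom (fun (d : r.B (f a).1 × p.B i) => ((f a).2 d.1, d.2)))) ⟨((f a).1, i), id⟩
    dsimp [PFunctor.toFunctor, tensorPoly, PFunctor.map, Function.comp] at h
    exact congrArg (fun (y : q.Obj (r'.B a × p.B i)) =>
      (⟨y.1, fun d => ((y.2 d).2, g (y.2 d).1)⟩ : Σ j : q.A, (q.B j → p.B i × X))) h
end

section
/- The composition product is duoidal over the Dirichlet product: for polynomial functors p₁, p₂, q₁, q₂ there is a natural transformation from the associated functor of (p₁ ∘ p₂) ⊗ (q₁ ∘ q₂) to the associated functor of (p₁ ⊗ q₁) ∘ (p₂ ⊗ q₂). -/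
open CategoryTheory

universe u

/-- The composition product of polynomial functors. -/
def compPoly (p q : PFunctor.{u, u}) : PFunctor.{u, u} :=
  ⟨Σ i : p.A, (p.B i → q.A), fun x => Σ d : p.B x.1, q.B (x.2 d)⟩

/-- the composition product is duoidal over the Dirichlet product: there is a
natural transformation `(p₁ ∘ p₂) ⊗ (q₁ ∘ q₂) ⟶ (p₁ ⊗ q₁) ∘ (p₂ ⊗ q₂)`. -/
theorem stmt_6 (p₁ p₂ q₁ q₂ : PFunctor.{u, u}) :
    Nonempty ((tensorPoly (compPoly p₁ p₂) (compPoly q₁ q₂)).toFunctor ⟶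
      (compPoly (tensorPoly p₁ q₁) (tensorPoly p₂ q₂)).toFunctor) := by
  exact ⟨{
    app := fun X => TypeCat.ofHom fun x =>
      ⟨⟨(x.1.1.1, x.1.2.1), fun de => (x.1.1.2 de.1, x.1.2.2 de.2)⟩,
        fun y => x.2 (⟨y.1.1, y.2.1⟩, ⟨y.1.2, y.2.2⟩)⟩
    naturality := fun X Y f => rfl }⟩
end
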